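/- arXiv:1807.11896 — 2 statements merged into one kernel-verified Lean document; each statement's English description precedes it below -/
import Mathlib

section
/- Suppose κ is weakly inaccessible and λ ≥ κ. Then the nonstationary ideal NS_{κ,λ} on P_κλ is not strongly normal: there exists a stationary set A ⊆ P_κλ and a function F : A → P_κλ with F(x) ⊊ x and |F(x)| < |x ∩ κ| for all x ∈ A, such that for every value a the preimage F^{-1}({a}) is nonstationary (in fact not even cofinal in (P_κλ, ⊆)). -/
universe u

open Cardinal FirstOrder

noncomputable section

namespace TwoCardinalWC

/-! ### Basic two-cardinal combinatorics in the ZFC universe `ZFSet` -/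

/-- The cardinality of a ZF-set. -/
def cardZ (x : ZFSet.{u}) : Cardinal.{u + 1} := #x.toSet

/-- `x` is a von Neumann ordinal: a transitive set of transitive sets. -/
def IsOrd (x : ZFSet.{u}) : Prop := x.IsTransitive ∧ ∀ y ∈ x.toSet, ZFSet.IsTransitive y

/-- `x` is a (von Neumann) cardinal: an ordinal not equinumerous to any of its members. -/
def IsCardZ (x : ZFSet.{u}) : Prop := IsOrd x ∧ ∀ y ∈ x.toSet, cardZ y < cardZ x

/-- `x` is an inaccessible cardinal. -/
def InaccZ (x : ZFSet.{u}) : Prop := IsCardZ x ∧ (cardZ x).IsInaccessible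

/-- `x` is a weakly inaccessible cardinal: an uncountable regular limit cardinal. -/
def WeaklyInaccZ (x : ZFSet.{u}) : Prop :=
  IsCardZ x ∧ (cardZ x).IsRegular ∧ ℵ₀ < cardZ x ∧
    ∀ d : Cardinal.{u + 1}, d < cardZ x → Order.succ d < cardZ x

/-- `κZ` is a Mahlo cardinal: inaccessible, and every club in `κZ` contains a regular cardinal. -/
def MahloZ (κZ : ZFSet.{u}) : Prop :=
  InaccZ κZ ∧ ∀ C : Set ZFSet.{u}, C ⊆ κZ.toSet →
    (∀ a ∈ κZ.toSet, ∃ b ∈ C, a ∈ b ∨ a = b) →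
    (∀ b ∈ κZ.toSet, b ≠ ∅ → (∀ a ∈ b.toSet, ∃ c ∈ C, (a ∈ c ∨ a = c) ∧ c ∈ b) → b ∈ C) →
    ∃ b ∈ C, IsCardZ b ∧ (cardZ b).IsRegular

/-- `P_μ(s)`: the collection of subsets of the ZF-set `s` of cardinality `< μ`. -/
def Plt (μ : Cardinal.{u + 1}) (s : ZFSet.{u}) : Set ZFSet.{u} := {y | y ⊆ s ∧ cardZ y < μ}

/-- `P_κ λ` as a collection of ZF-sets. -/
def PKL (κZ lamZ : ZFSet.{u}) : Set ZFSet.{u} := Plt (cardZ κZ) lamZ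

/-- `P_κ λ` as a single ZF-set. -/
def PKLz (κZ lamZ : ZFSet.{u}) : ZFSet.{u} :=
  ZFSet.sep (fun y => cardZ y < cardZ κZ) (ZFSet.powerset lamZ)

/-- `κ_x = |x ∩ κ|`. -/
def kap (κZ x : ZFSet.{u}) : Cardinal.{u + 1} := cardZ (x ∩ κZ)

/-- `P_{κ_x} x`: subsets of `x` of cardinality `< κ_x`. -/
def Psub (κZ x : ZFSet.{u}) : Set ZFSet.{u} := Plt (kap κZ x) x

/-- The weak club `C_f = {x ∈ P_κλ : f[P_{κ_x}x] ⊆ P_{κ_x}x}`. -/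
def weakClub (κZ lamZ : ZFSet.{u}) (f : ZFSet.{u} → ZFSet.{u}) : Set ZFSet.{u} :=
  {x | x ∈ PKL κZ lamZ ∧ ∀ y ∈ Psub κZ x, f y ∈ Psub κZ x}

/-- `S` is strongly stationary in `P_κλ`: it meets every weak club. -/
def stronglyStat (κZ lamZ : ZFSet.{u}) (S : Set ZFSet.{u}) : Prop :=
  ∀ f : ZFSet.{u} → ZFSet.{u}, (S ∩ weakClub κZ lamZ f).Nonempty

/-- `C` is `1`-closed: whenever `κ_x` is inaccessible and `C ∩ P_{κ_x}x` is
strongly stationary in `P_{κ_x}x`, then `x ∈ C`. -/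
def oneClosed (κZ lamZ : ZFSet.{u}) (C : Set ZFSet.{u}) : Prop :=
  ∀ x ∈ PKL κZ lamZ, (kap κZ x).IsInaccessible →
    stronglyStat (x ∩ κZ) x (C ∩ Psub κZ x) → x ∈ C

/-- `C ⊆ P_κλ` is `1`-club: strongly stationary and `1`-closed. -/
def oneClub (κZ lamZ : ZFSet.{u}) (C : Set ZFSet.{u}) : Prop :=
  C ⊆ PKL κZ lamZ ∧ stronglyStat κZ lamZ C ∧ oneClosed κZ lamZ C

/-- The image `f''x` of a ZF-set under an arbitrary (class) function. -/
def imgZ (f : ZFSet.{u} → ZFSet.{u}) (x : ZFSet.{u}) : ZFSet.{u} :=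
  @ZFSet.image f (Classical.allZFSetDefinable _) x

/-! ### The language of set theory and elementarity -/

/-- Relation symbols: one binary relation (membership). -/
def memRel : ℕ → Type (u + 1)
  | 2 => PUnit
  | _ => PEmpty

/-- The language of set theory: a single binary relation `∈`. -/
def Lmem : FirstOrder.Language.{u + 1, u + 1} := ⟨fun _ => PEmpty, memRel⟩

/-- The `∈`-structure on a collection of ZF-sets. -/
def memStruct (W : Set ZFSet.{u}) : Lmem.{u}.Structure ↥W where
  funMap := fun e _ => e.elim
  RelMap := fun {n} r v =>
    match n, r, v with
    | 0, r, _ => r.elim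
    | 1, r, _ => r.elim
    | 2, _, v => ((v 0 : ZFSet.{u}) ∈ (v 1 : ZFSet.{u}))
    | (_ + 3), r, _ => r.elim

/-- Realization of an `∈`-formula in `(W, ∈)`. -/
def RealizeMem (W : Set ZFSet.{u}) {n : ℕ} (φ : Lmem.{u}.BoundedFormula Empty n)
    (w : Fin n → ↥W) : Prop :=
  letI := memStruct W
  φ.Realize (fun e => e.elim) w

/-- `j` is an elementary embedding from `(Ms, ∈)` into `(Ns, ∈)`. -/
def IsElemEmb (Ms Ns : Set ZFSet.{u}) (j : ZFSet.{u} → ZFSet.{u}) : Prop :=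
  ∃ h : ∀ a ∈ Ms, j a ∈ Ns,
    ∀ (n : ℕ) (φ : Lmem.{u}.BoundedFormula Empty n) (w : Fin n → ↥Ms),
      RealizeMem Ms φ w ↔ RealizeMem Ns φ (fun i => ⟨j ((w i : ZFSet.{u})), h _ (w i).2⟩)

/-- A predicate on ZF-sets is definable over `Mz` (with parameters from `Mz`). -/
def DefinableOver (Mz : ZFSet.{u}) (p : ZFSet.{u} → Prop) : Prop :=
  ∃ (n : ℕ) (φ : Lmem.{u}.BoundedFormula Empty (n + 1)) (v : Fin n → ↥Mz.toSet),
    ∀ (a : ZFSet.{u}) (ha : a ∈ Mz.toSet), p a ↔ RealizeMem Mz.toSet φ (Fin.snoc v ⟨a, ha⟩)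

/-- A class function is definable over `Mz` (with parameters from `Mz`). -/
def DefinableFunOver (Mz : ZFSet.{u}) (f : ZFSet.{u} → ZFSet.{u}) : Prop :=
  (∀ a, a ∈ Mz → f a ∈ Mz) ∧
  ∃ (n : ℕ) (φ : Lmem.{u}.BoundedFormula Empty (n + 2)) (v : Fin n → ↥Mz.toSet),
    ∀ (a : ZFSet.{u}) (ha : a ∈ Mz.toSet) (b : ZFSet.{u}) (hb : b ∈ Mz.toSet),
      f a = b ↔ RealizeMem Mz.toSet φ (Fin.snoc (Fin.snoc v ⟨a, ha⟩) ⟨b, hb⟩)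

/-- `Mz` is a transitive model of `ZFC⁻`: transitive and closed under the
`ZFC⁻` operations (pairing, union, infinity, definable separation and replacement). -/
def SatZFCminus (Mz : ZFSet.{u}) : Prop :=
  Mz.IsTransitive ∧ ZFSet.omega ∈ Mz ∧
  (∀ a, a ∈ Mz → ∀ b, b ∈ Mz → ({a, b} : ZFSet.{u}) ∈ Mz) ∧
  (∀ a, a ∈ Mz → ZFSet.sUnion a ∈ Mz) ∧
  (∀ p : ZFSet.{u} → Prop, DefinableOver Mz p → ∀ a, a ∈ Mz → ZFSet.sep p a ∈ Mz) ∧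
  (∀ f : ZFSet.{u} → ZFSet.{u}, DefinableFunOver Mz f → ∀ a, a ∈ Mz → imgZ f a ∈ Mz)

/-- `W ⊆ P_κλ` is weakly compact: for every `A ⊆ λ` there are a transitive model
`M ⊨ ZFC⁻` with `λ, A, W ∈ M`, closed under `<κ`-sized subsets, a transitive `N` and an
elementary embedding `j : M → N` with critical point `κ`, `j(κ) > λ` and `j''λ ∈ j(W)`. -/
def IsWC (κZ lamZ W : ZFSet.{u}) : Prop :=
  W ⊆ PKLz κZ lamZ ∧
  ∀ A : ZFSet.{u}, A ⊆ lamZ →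
    ∃ (Mz Nz : ZFSet.{u}) (j : ZFSet.{u} → ZFSet.{u}),
      SatZFCminus Mz ∧ Nz.IsTransitive ∧
      lamZ ∈ Mz ∧ A ∈ Mz ∧ W ∈ Mz ∧
      (∀ s : ZFSet.{u}, s.toSet ⊆ Mz.toSet → cardZ s < cardZ κZ → s ∈ Mz) ∧
      IsElemEmb Mz.toSet Nz.toSet j ∧
      (∀ a, a ∈ κZ → j a = a) ∧ j κZ ≠ κZ ∧
      lamZ ∈ j κZ ∧ imgZ j lamZ ∈ j W

/-! ### The two-cardinal cumulative hierarchy -/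

/-- Baumgartner's hierarchy `V_α(δ, A)`:
`V_0 = A`, `V_{α+1} = P_δ(V_α) ∪ V_α`, unions at limits. -/
def Vh (δ : Cardinal.{u + 1}) (A : Set ZFSet.{u}) (α : Ordinal.{u + 1}) : Set ZFSet.{u} :=
  Ordinal.limitRecOn α A (fun _ ih => {y | y.toSet ⊆ ih ∧ cardZ y < δ} ∪ ih)
    (fun o _ ih => {s | ∃ β, ∃ h : β < o, s ∈ ih β h})

/-- The usual von Neumann hierarchy, as a collection of ZF-sets. -/
def VN (α : Ordinal.{u + 1}) : Set ZFSet.{u} :=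
  Ordinal.limitRecOn α (∅ : Set ZFSet.{u}) (fun _ ih => {y | y.toSet ⊆ ih})
    (fun o _ ih => {s | ∃ β, ∃ h : β < o, s ∈ ih β h})

/-! ### The language with `∈` and a unary predicate `R` -/

/-- Relation symbols: a unary predicate and a binary relation. -/
def lrRel : ℕ → Type (u + 1)
  | 1 => PUnit
  | 2 => PUnit
  | _ => PEmpty

/-- The language with membership and one unary predicate. -/
def LR : FirstOrder.Language.{u + 1, u + 1} := ⟨fun _ => PEmpty, lrRel⟩

/-- The structure `(W, ∈, R)`. -/
def rStruct (W R : Set ZFSet.{u}) : LR.{u}.Structure ↥W where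
  funMap := fun e _ => e.elim
  RelMap := fun {n} r v =>
    match n, r, v with
    | 0, r, _ => r.elim
    | 1, _, v => ((v 0 : ZFSet.{u}) ∈ R)
    | 2, _, v => ((v 0 : ZFSet.{u}) ∈ (v 1 : ZFSet.{u}))
    | (_ + 3), r, _ => r.elim

/-- Realization of an `LR`-formula in `(W, ∈, R)`. -/
def RealizeR (W R : Set ZFSet.{u}) {n : ℕ} (φ : LR.{u}.BoundedFormula Empty n)
    (w : Fin n → ↥W) : Prop :=
  letI := rStruct W R
  φ.Realize (fun e => e.elim) w

/-- Satisfaction of a first-order sentence in `(W, ∈, R)`. -/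
def SatR (W R : Set ZFSet.{u}) (φ : LR.{u}.Sentence) : Prop :=
  RealizeR W R φ (fun i => i.elim0)

/-- `(W₁, ∈, R ∩ W₁)` is an elementary substructure of `(W₂, ∈, R)`. -/
def ElemSubR (W₁ W₂ R : Set ZFSet.{u}) : Prop :=
  ∃ h : W₁ ⊆ W₂,
    ∀ (n : ℕ) (φ : LR.{u}.BoundedFormula Empty n) (w : Fin n → ↥W₁),
      RealizeR W₁ (R ∩ W₁) φ w ↔ RealizeR W₂ R φ (fun i => ⟨(w i : ZFSet.{u}), h (w i).2⟩)


/-- `C` is a club subset of `P_κλ`: cofinal in `(P_κλ, ⊆)` and closed under unions of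
`⊆`-increasing chains of length less than `κ`. -/
def chainClub (κZ lamZ : ZFSet.{u}) (C : Set ZFSet.{u}) : Prop :=
  C ⊆ PKL κZ lamZ ∧ (∀ x ∈ PKL κZ lamZ, ∃ y ∈ C, x ⊆ y) ∧
  ∀ η : Ordinal.{u + 1}, η ≠ 0 → η < (cardZ κZ).ord →
    ∀ g : Ordinal.{u + 1} → ZFSet.{u},
      (∀ β, β < η → g β ∈ C) →
      (∀ β₁ β₂, β₁ < β₂ → β₂ < η → g β₁ ⊆ g β₂) →
      ZFSet.sep (fun t => ∃ β, ∃ _ : β < η, t ∈ g β) lamZ ∈ C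



/-! ### Auxiliary lemmas for Statement 2 -/

open scoped ZFSet

theorem ZFSet.mem_toSet (a x : ZFSet.{u}) : a ∈ x.toSet ↔ a ∈ x := Iff.rfl

theorem ZFSet.toSet_empty : ZFSet.toSet (∅ : ZFSet.{u}) = ∅ := ZFSet.coe_empty

theorem ZFSet.toSet_union (x y : ZFSet.{u}) : (x ∪ y).toSet = x.toSet ∪ y.toSet :=
  ZFSet.coe_union x y

theorem ZFSet.toSet_subset_iff {x y : ZFSet.{u}} : x.toSet ⊆ y.toSet ↔ x ⊆ y :=
  ZFSet.coe_subset_coe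

lemma cardZ_mono {x y : ZFSet.{u}} (h : x ⊆ y) : cardZ x ≤ cardZ y :=
  Cardinal.mk_le_mk_of_subset (ZFSet.toSet_subset_iff.mpr h)

lemma isOrd_of_mem {k y : ZFSet.{u}} (hk : IsOrd k) (hy : y ∈ k) : IsOrd y := by
  refine ⟨hk.2 y hy, fun z hz => hk.2 z ?_⟩
  exact hk.1 y hy hz

lemma ord_tri (x : ZFSet.{u}) : IsOrd x → ∀ y : ZFSet.{u}, IsOrd y → x ∈ y ∨ x = y ∨ y ∈ x := by
  induction x using ZFSet.inductionOn with
  | _ x ihx =>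
    intro hx y
    induction y using ZFSet.inductionOn with
    | _ y ihy =>
      intro hy
      by_cases h1 : ∃ b ∈ x, b = y ∨ y ∈ b
      · obtain ⟨b, hb, hb'⟩ := h1
        refine Or.inr (Or.inr ?_)
        rcases hb' with rfl | e
        · exact hb
        · exact hx.1 b hb e
      · push_neg at h1
        have hxy : ∀ b ∈ x, b ∈ y := by
          intro b hb
          rcases ihx b hb (isOrd_of_mem hx hb) y hy with h | h | h
          · exact h
          · exact absurd h (h1 b hb).1
          · exact absurd h (h1 b hb).2
        by_cases h2 : ∃ c ∈ y, x = c ∨ x ∈ c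
        · obtain ⟨c, hc, hc'⟩ := h2
          refine Or.inl ?_
          rcases hc' with rfl | e
          · exact hc
          · exact hy.1 c hc e
        · push_neg at h2
          refine Or.inr (Or.inl (ZFSet.ext fun z => ⟨fun hz => hxy z hz, fun hz => ?_⟩))
          rcases ihy z hz (isOrd_of_mem hy hz) with h | h | h
          · exact absurd h (h2 z hz).2
          · exact absurd h (h2 z hz).1
          · exact h

lemma mem_of_trans_proper {k y : ZFSet.{u}} (hk : IsOrd k) (hy : y.IsTransitive)
    (hsub : y ⊆ k) (hne : y ≠ k) : y ∈ k := by
  have hyo : IsOrd y := ⟨hy, fun z hz => (isOrd_of_mem hk (hsub hz)).1⟩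
  rcases ord_tri y hyo k hk with h | h | h
  · exact h
  · exact absurd h hne
  · exact absurd (hsub h) (ZFSet.mem_irrefl k)

lemma empty_mem_PKL {κZ lamZ : ZFSet.{u}} (hκ : ℵ₀ ≤ cardZ κZ) : ∅ ∈ PKL κZ lamZ := by
  refine ⟨ZFSet.empty_subset lamZ, ?_⟩
  have : cardZ (∅ : ZFSet.{u}) = 0 := by simp [cardZ, ZFSet.toSet_empty]
  rw [this]
  exact lt_of_lt_of_le aleph0_pos hκ

lemma cardZ_insert_lt {κZ t x : ZFSet.{u}} (hκ : ℵ₀ ≤ cardZ κZ)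
    (hx : cardZ x < cardZ κZ) : cardZ (insert t x) < cardZ κZ := by
  have hts : (insert t x).toSet = insert t x.toSet := by
    ext z; simp [ZFSet.mem_toSet, ZFSet.mem_insert_iff]
  have h1 : cardZ (insert t x) ≤ cardZ x + 1 := by
    rw [cardZ, hts]; exact Cardinal.mk_insert_le
  refine lt_of_le_of_lt h1 (Cardinal.add_lt_of_lt hκ hx ?_)
  exact lt_of_lt_of_le one_lt_aleph0 hκ

lemma cardZ_union_lt {κZ x y : ZFSet.{u}} (hκ : ℵ₀ ≤ cardZ κZ)
    (hx : cardZ x < cardZ κZ) (hy : cardZ y < cardZ κZ) : cardZ (x ∪ y) < cardZ κZ := by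
  have h1 : cardZ (x ∪ y) ≤ cardZ x + cardZ y := by
    rw [cardZ, ZFSet.toSet_union]; exact Cardinal.mk_union_le _ _
  exact lt_of_le_of_lt h1 (Cardinal.add_lt_of_lt hκ hx hy)

lemma sepUnion_mem_PKL {κZ lamZ : ZFSet.{u}} (hreg : (cardZ κZ).IsRegular)
    {η : Ordinal.{u + 1}} (hηκ : η < (cardZ κZ).ord) {g : Ordinal.{u + 1} → ZFSet.{u}}
    (hg : ∀ β, β < η → g β ∈ PKL κZ lamZ) :
    ZFSet.sep (fun t => ∃ β, ∃ _ : β < η, t ∈ g β) lamZ ∈ PKL κZ lamZ := by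
  constructor
  · exact fun z hz => (ZFSet.mem_sep.mp hz).1
  · have hset : (ZFSet.sep (fun t => ∃ β, ∃ _ : β < η, t ∈ g β) lamZ).toSet ⊆
        ⋃ (i : η.ToType), (g ((Ordinal.ToType.mk (o := η)).symm i).1).toSet := by
      intro t ht
      rw [ZFSet.mem_toSet, ZFSet.mem_sep] at ht
      obtain ⟨-, β, hβ, htβ⟩ := ht
      refine Set.mem_iUnion.mpr ⟨(Ordinal.ToType.mk (o := η)) ⟨β, hβ⟩, ?_⟩
      rw [OrderIso.symm_apply_apply]
      exact htβ
    have hcard : #(⋃ (i : η.ToType), (g ((Ordinal.ToType.mk (o := η)).symm i).1).toSet)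
        < cardZ κZ := by
      rw [Cardinal.card_iUnion_lt_iff_forall_of_isRegular hreg ?_]
      · intro i
        exact (hg _ ((Ordinal.ToType.mk (o := η)).symm i).2).2
      · rw [Cardinal.mk_toType]
        exact Cardinal.lt_ord.mp hηκ
    exact lt_of_le_of_lt (Cardinal.mk_le_mk_of_subset hset) hcard

lemma cardZ_sUnion_lt {κZ s : ZFSet.{u}} (hreg : (cardZ κZ).IsRegular)
    (hs : cardZ s < cardZ κZ) (hmem : ∀ d, d ∈ s → cardZ d < cardZ κZ) :
    cardZ (⋃₀ s : ZFSet.{u}) < cardZ κZ := by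
  have hset : (⋃₀ s : ZFSet.{u}).toSet ⊆ ⋃ (d : s.toSet), (d.1.toSet) := by
    intro t ht
    rw [ZFSet.mem_toSet, ZFSet.mem_sUnion] at ht
    obtain ⟨z, hz, htz⟩ := ht
    exact Set.mem_iUnion.mpr ⟨⟨z, hz⟩, htz⟩
  refine lt_of_le_of_lt (Cardinal.mk_le_mk_of_subset hset) ?_
  rw [Cardinal.card_iUnion_lt_iff_forall_of_isRegular hreg hs]
  exact fun d => hmem d.1 d.2

/-- there is an uncountable member of `κZ` -/
lemma exists_uncountable_mem {κZ : ZFSet.{u}} (hκord : IsOrd κZ)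
    (hsucc : Order.succ ℵ₀ < cardZ κZ) : ∃ w, w ∈ κZ ∧ ℵ₀ < cardZ w := by
  by_contra hcon
  push_neg at hcon
  let r : κZ.toSet → κZ.toSet → Prop := fun a b => a.1 ∈ b.1
  haveI : IsTrans κZ.toSet r := ⟨fun a b c hab hbc =>
    ((isOrd_of_mem hκord c.2).1 : c.1.IsTransitive) b.1 hbc hab⟩
  haveI : IsTrichotomous κZ.toSet r := ⟨by
    intro a b hab hba
    rcases ord_tri a.1 (isOrd_of_mem hκord a.2) b.1 (isOrd_of_mem hκord b.2) with h | h | h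
    · exact absurd h hab
    · exact Subtype.ext h
    · exact absurd h hba⟩
  haveI : IsWellFounded κZ.toSet r := ⟨InvImage.wf (fun a : κZ.toSet => a.1) ZFSet.mem_wf⟩
  haveI : IsWellOrder κZ.toSet r := ⟨⟩
  have h1 : ∀ β, β < Ordinal.type r → β.card ≤ ℵ₀ := by
    intro β hβ
    obtain ⟨a, rfl⟩ := Ordinal.typein_surj r hβ
    rw [Ordinal.card_typein]
    have e : {b : κZ.toSet // r b a} ≃ a.1.toSet :=
      { toFun := fun b => ⟨b.1.1, b.2⟩
        invFun := fun z => ⟨⟨z.1, hκord.1 a.1 a.2 z.2⟩, z.2⟩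
        left_inv := fun b => by ext; rfl
        right_inv := fun z => rfl }
    calc #{b : κZ.toSet // r b a} = cardZ a.1 := Cardinal.mk_congr e
      _ ≤ ℵ₀ := hcon a.1 a.2
  have h2 : Ordinal.type r ≤ (Order.succ ℵ₀).ord := by
    by_contra hlt
    push_neg at hlt
    have := h1 _ hlt
    rw [Cardinal.card_ord] at this
    exact absurd this (not_le.mpr (Order.lt_succ ℵ₀))
  have h3 : cardZ κZ ≤ Order.succ ℵ₀ := by
    have := Ordinal.card_le_card h2
    rwa [Cardinal.card_ord, Ordinal.card_type] at this
  exact absurd hsucc (not_lt.mpr h3)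

/-- step ordinal: a member of κZ containing x ∩ κZ and w -/
lemma step_ord {κZ lamZ : ZFSet.{u}} (hκord : IsOrd κZ) (hκcard : IsCardZ κZ)
    (hreg : (cardZ κZ).IsRegular) {w : ZFSet.{u}} (hw : w ∈ κZ)
    {x : ZFSet.{u}} (hx : x ∈ PKL κZ lamZ) :
    ∃ s, s ∈ κZ ∧ (x ∩ κZ) ⊆ s ∧ w ⊆ s := by
  refine ⟨(x ∩ κZ) ∪ (⋃₀ (x ∩ κZ) : ZFSet.{u}) ∪ w, ?_, ?_, ?_⟩
  · have htrans : ((x ∩ κZ) ∪ (⋃₀ (x ∩ κZ) : ZFSet.{u}) ∪ w).IsTransitive := by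
      intro z hz
      rw [ZFSet.mem_union, ZFSet.mem_union] at hz
      intro b hb
      rcases hz with hz | hz
      · rcases hz with hz | hz
        · exact ZFSet.mem_union.mpr (Or.inl (ZFSet.mem_union.mpr
            (Or.inr (ZFSet.mem_sUnion.mpr ⟨z, hz, hb⟩))))
        · obtain ⟨d, hd, hzd⟩ := ZFSet.mem_sUnion.mp hz
          have hdκ : d ∈ κZ := (ZFSet.mem_inter.mp hd).2
          have hbd : b ∈ d := ((isOrd_of_mem hκord hdκ).1 : d.IsTransitive) z hzd hb
          exact ZFSet.mem_union.mpr (Or.inl (ZFSet.mem_union.mpr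
            (Or.inr (ZFSet.mem_sUnion.mpr ⟨d, hd, hbd⟩))))
      · exact ZFSet.mem_union.mpr (Or.inr
          (((isOrd_of_mem hκord hw).1 : w.IsTransitive) z hz hb))
    have hsub : ((x ∩ κZ) ∪ (⋃₀ (x ∩ κZ) : ZFSet.{u}) ∪ w) ⊆ κZ := by
      intro z hz
      rw [ZFSet.mem_union, ZFSet.mem_union] at hz
      rcases hz with (hz | hz) | hz
      · exact (ZFSet.mem_inter.mp hz).2
      · obtain ⟨d, hd, hzd⟩ := ZFSet.mem_sUnion.mp hz
        exact hκord.1 d (ZFSet.mem_inter.mp hd).2 hzd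
      · exact hκord.1 w hw hz
    have hcardlt : cardZ ((x ∩ κZ) ∪ (⋃₀ (x ∩ κZ) : ZFSet.{u}) ∪ w) < cardZ κZ := by
      have hinter : cardZ (x ∩ κZ) < cardZ κZ :=
        lt_of_le_of_lt (cardZ_mono fun z hz => (ZFSet.mem_inter.mp hz).1) hx.2
      refine cardZ_union_lt hreg.1 (cardZ_union_lt hreg.1 hinter ?_) ?_
      · exact cardZ_sUnion_lt hreg hinter
          (fun d hd => hκcard.2 d (ZFSet.mem_inter.mp hd).2)
      · exact hκcard.2 w hw
    refine mem_of_trans_proper hκord htrans hsub ?_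
    intro heq
    rw [heq] at hcardlt
    exact absurd hcardlt (lt_irrefl _)
  · intro z hz
    exact ZFSet.mem_union.mpr (Or.inl (ZFSet.mem_union.mpr (Or.inl hz)))
  · intro z hz
    exact ZFSet.mem_union.mpr (Or.inr hz)

/-! ### the stationary set and the function -/

def cfSeq (o : ZFSet.{u}) (f : ℕ → ZFSet.{u}) : Prop :=
  (∀ n, f n ∈ o) ∧ ∀ b, b ∈ o → ∃ n, b ∈ f n ∨ b = f n

def Aset (κZ lamZ : ZFSet.{u}) : Set ZFSet.{u} :=
  {x | x ∈ PKL κZ lamZ ∧ (x ∩ κZ).IsTransitive ∧ ℵ₀ < cardZ (x ∩ κZ) ∧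
    ∃ f : ℕ → ZFSet.{u}, cfSeq (x ∩ κZ) f}

open scoped Classical in
def Ffun (κZ x : ZFSet.{u}) : ZFSet.{u} :=
  if h : ∃ f : ℕ → ZFSet.{u}, cfSeq (x ∩ κZ) f then
    ZFSet.sep (fun t => ∃ n, t = h.choose n) x else ∅

lemma Ffun_subset {κZ x : ZFSet.{u}} : Ffun κZ x ⊆ x := by
  rw [Ffun]
  split
  · exact fun z hz => (ZFSet.mem_sep.mp hz).1
  · exact ZFSet.empty_subset x

lemma Ffun_card {κZ x : ZFSet.{u}} : cardZ (Ffun κZ x) ≤ ℵ₀ := by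
  rw [Ffun]
  split
  case isTrue h =>
    refine Cardinal.le_aleph0_iff_set_countable.mpr ?_
    refine (Set.countable_range h.choose).mono ?_
    intro t ht
    rw [ZFSet.mem_toSet, ZFSet.mem_sep] at ht
    obtain ⟨-, n, rfl⟩ := ht
    exact Set.mem_range_self n
  case isFalse =>
    refine Cardinal.le_aleph0_iff_set_countable.mpr ?_
    rw [ZFSet.toSet_empty]
    exact Set.countable_empty

/-- the key recovery property: `F x` determines `x ∩ κZ` -/
lemma mem_inter_iff_Ffun {κZ lamZ x : ZFSet.{u}} (hx : x ∈ Aset κZ lamZ) (b : ZFSet.{u}) :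
    b ∈ x ∩ κZ ↔ ∃ c, c ∈ Ffun κZ x ∧ (b ∈ c ∨ b = c) := by
  obtain ⟨hxP, htr, hcard, hex⟩ := hx
  have hf := hex.choose_spec
  rw [Ffun, dif_pos hex]
  constructor
  · intro hb
    obtain ⟨n, hn⟩ := hf.2 b hb
    refine ⟨hex.choose n, ZFSet.mem_sep.mpr ⟨?_, n, rfl⟩, hn⟩
    exact (ZFSet.mem_inter.mp (hf.1 n)).1
  · rintro ⟨c, hc, hbc⟩
    obtain ⟨hcx, n, rfl⟩ := ZFSet.mem_sep.mp hc
    have hcm : hex.choose n ∈ x ∩ κZ := hf.1 n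
    rcases hbc with hb | rfl
    · exact htr _ hcm hb
    · exact hcm

lemma inter_eq_of_Ffun_eq {κZ lamZ x₁ x₂ : ZFSet.{u}} (h1 : x₁ ∈ Aset κZ lamZ)
    (h2 : x₂ ∈ Aset κZ lamZ) (he : Ffun κZ x₁ = Ffun κZ x₂) : x₁ ∩ κZ = x₂ ∩ κZ := by
  apply ZFSet.ext
  intro b
  rw [mem_inter_iff_Ffun (lamZ := lamZ) h1, mem_inter_iff_Ffun (lamZ := lamZ) h2, he]

/-! ### clubs -/

lemma singleton_chainClub {κZ lamZ t : ZFSet.{u}} (hreg : (cardZ κZ).IsRegular)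
    (ht : t ∈ lamZ) : chainClub κZ lamZ {x | x ∈ PKL κZ lamZ ∧ t ∈ x} := by
  refine ⟨fun x hx => hx.1, ?_, ?_⟩
  · intro x hx
    refine ⟨insert t x, ⟨⟨?_, cardZ_insert_lt hreg.1 hx.2⟩, ZFSet.mem_insert t x⟩, ?_⟩
    · intro z hz
      rcases ZFSet.mem_insert_iff.mp hz with rfl | hz
      · exact ht
      · exact hx.1 hz
    · exact fun z hz => ZFSet.mem_insert_iff.mpr (Or.inr hz)
  · intro η hη0 hηκ g hg hmono
    refine ⟨sepUnion_mem_PKL hreg hηκ (fun β hβ => (hg β hβ).1), ?_⟩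
    have h0 : (0 : Ordinal) < η := pos_iff_ne_zero.mpr hη0
    exact ZFSet.mem_sep.mpr ⟨ht, 0, h0, (hg 0 h0).2⟩

lemma PKL_chainClub {κZ lamZ : ZFSet.{u}} (hreg : (cardZ κZ).IsRegular) :
    chainClub κZ lamZ (PKL κZ lamZ) := by
  refine ⟨fun x hx => hx, fun x hx => ⟨x, hx, fun z hz => hz⟩, ?_⟩
  intro η hη0 hηκ g hg hmono
  exact sepUnion_mem_PKL hreg hηκ hg

/-- If `κ` is weakly inaccessible and `λ ≥ κ`, then `NS_{κ,λ}` is not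
strongly normal: there are a stationary `A ⊆ P_κλ` and `F : A → P_κλ` with
`F(x) ⊊ x` and `|F(x)| < |x ∩ κ|` on `A`, all of whose fibers are nonstationary and
not even cofinal in `(P_κλ, ⊆)`. -/
theorem NS_not_strongly_normal (κZ lamZ : ZFSet.{u})
    (hκord : IsOrd κZ) (hκ : WeaklyInaccZ κZ) (hlamord : IsOrd lamZ) (hκlam : κZ ⊆ lamZ) :
    ∃ A : Set ZFSet.{u}, A ⊆ PKL κZ lamZ ∧
      (∀ C : Set ZFSet.{u}, chainClub κZ lamZ C → (A ∩ C).Nonempty) ∧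
      ∃ F : ZFSet.{u} → ZFSet.{u},
        (∀ x ∈ A, F x ⊆ x ∧ F x ≠ x ∧ cardZ (F x) < kap κZ x) ∧
        ∀ a : ZFSet.{u},
          (∃ C : Set ZFSet.{u}, chainClub κZ lamZ C ∧
            ∀ x ∈ A, F x = a → x ∉ C) ∧
          ¬ (∀ z ∈ PKL κZ lamZ, ∃ x ∈ A, F x = a ∧ z ⊆ x) := by
  classical
  obtain ⟨hκcard, hreg, hℵ, hlim⟩ := hκ
  obtain ⟨w, hwκ, hwcard⟩ := exists_uncountable_mem hκord (hlim ℵ₀ hℵ)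
  refine ⟨Aset κZ lamZ, fun x hx => hx.1, ?_, Ffun κZ, ?_, ?_⟩
  · -- stationarity
    intro C hC
    obtain ⟨hC1, hC2, hC3⟩ := hC
    have hstep : ∀ x, x ∈ C → ∃ s, s ∈ κZ ∧ (x ∩ κZ) ⊆ s ∧ w ⊆ s :=
      fun x hx => step_ord hκord hκcard hreg hwκ (hC1 hx)
    have hext : ∀ x, x ∈ C → ∀ s, s ∈ κZ → ∃ y, y ∈ C ∧ insert s (x ∪ s) ⊆ y := by
      intro x hx s hs
      have hsP : insert s (x ∪ s) ∈ PKL κZ lamZ := by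
        constructor
        · intro z hz
          rcases ZFSet.mem_insert_iff.mp hz with rfl | hz
          · exact hκlam hs
          · rcases ZFSet.mem_union.mp hz with hz | hz
            · exact (hC1 hx).1 hz
            · exact hκlam (hκord.1 s hs hz)
        · exact cardZ_insert_lt hreg.1 (cardZ_union_lt hreg.1 (hC1 hx).2 (hκcard.2 s hs))
      obtain ⟨y, hyC, hysub⟩ := hC2 _ hsP
      exact ⟨y, hyC, hysub⟩
    obtain ⟨x0, hx0C, -⟩ := hC2 ∅ (empty_mem_PKL hreg.1)
    let T := {q : ZFSet.{u} × ZFSet.{u} // q.1 ∈ C ∧ q.2 ∈ κZ ∧ (q.1 ∩ κZ) ⊆ q.2 ∧ w ⊆ q.2}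
    let mkT : ∀ x, x ∈ C → T := fun x hx =>
      ⟨(x, (hstep x hx).choose), hx, (hstep x hx).choose_spec.1,
        (hstep x hx).choose_spec.2.1, (hstep x hx).choose_spec.2.2⟩
    let stepT : T → T := fun q => mkT (hext q.1.1 q.2.1 q.1.2 q.2.2.1).choose
        (hext q.1.1 q.2.1 q.1.2 q.2.2.1).choose_spec.1
    let seq : ℕ → T := fun n => Nat.rec (mkT x0 hx0C) (fun _ q => stepT q) n
    let X : ℕ → ZFSet.{u} := fun n => (seq n).1.1
    let S : ℕ → ZFSet.{u} := fun n => (seq n).1.2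
    have hXC : ∀ n, X n ∈ C := fun n => (seq n).2.1
    have hSκ : ∀ n, S n ∈ κZ := fun n => (seq n).2.2.1
    have hXS : ∀ n, (X n ∩ κZ) ⊆ S n := fun n => (seq n).2.2.2.1
    have hwS : ∀ n, w ⊆ S n := fun n => (seq n).2.2.2.2
    have hlink : ∀ n, insert (S n) (X n ∪ S n) ⊆ X (n + 1) := fun n =>
      (hext (seq n).1.1 (seq n).2.1 (seq n).1.2 (seq n).2.2.1).choose_spec.2
    have hXmono : ∀ n, X n ⊆ X (n + 1) := fun n z hz =>
      hlink n (ZFSet.mem_insert_iff.mpr (Or.inr (ZFSet.mem_union.mpr (Or.inl hz))))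
    have hXle : ∀ m n, m ≤ n → X m ⊆ X n := by
      intro m n h
      induction h with
      | refl => exact fun z hz => hz
      | step h ih => exact fun z hz => hXmono _ (ih hz)
    have hSX : ∀ n, S n ∈ X (n + 1) := fun n => hlink n (ZFSet.mem_insert _ _)
    have hSsubX : ∀ n, S n ⊆ X (n + 1) := fun n z hz =>
      hlink n (ZFSet.mem_insert_iff.mpr (Or.inr (ZFSet.mem_union.mpr (Or.inr hz))))
    have hXPKL : ∀ n, X n ∈ PKL κZ lamZ := fun n => hC1 (hXC n)
    let g : Ordinal.{u + 1} → ZFSet.{u} := fun β =>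
      if h : ∃ n : ℕ, β = (n : Ordinal) then X h.choose else ∅
    have hg_nat : ∀ n : ℕ, g (n : Ordinal) = X n := by
      intro n
      have hn : ∃ m : ℕ, (n : Ordinal.{u + 1}) = (m : Ordinal) := ⟨n, rfl⟩
      have he : hn.choose = n := by
        have h2 := hn.choose_spec
        exact_mod_cast h2.symm
      simp only [g, dif_pos hn, he]
    have hωlt : (Ordinal.omega0 : Ordinal.{u + 1}) < (cardZ κZ).ord := by
      rw [← Cardinal.ord_aleph0]
      exact Cardinal.ord_lt_ord.mpr hℵ
    have hg1 : ∀ β, β < Ordinal.omega0 → g β ∈ C := by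
      intro β hβ
      obtain ⟨n, rfl⟩ := Ordinal.lt_omega0.mp hβ
      rw [hg_nat]; exact hXC n
    have hg2 : ∀ β₁ β₂, β₁ < β₂ → β₂ < Ordinal.omega0 → g β₁ ⊆ g β₂ := by
      intro β₁ β₂ h12 h2
      obtain ⟨n, rfl⟩ := Ordinal.lt_omega0.mp h2
      obtain ⟨m, rfl⟩ := Ordinal.lt_omega0.mp (h12.trans h2)
      rw [hg_nat, hg_nat]
      exact hXle m n (le_of_lt (by exact_mod_cast h12))
    have hYC : ZFSet.sep (fun t => ∃ β, ∃ _ : β < Ordinal.omega0, t ∈ g β) lamZ ∈ C :=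
      hC3 _ Ordinal.omega0_ne_zero hωlt g hg1 hg2
    set Y := ZFSet.sep (fun t => ∃ β, ∃ _ : β < Ordinal.omega0, t ∈ g β) lamZ with hYdef
    have hYmem : ∀ t, t ∈ Y ↔ ∃ n, t ∈ X n := by
      intro t
      rw [hYdef, ZFSet.mem_sep]
      constructor
      · rintro ⟨-, β, hβ, ht⟩
        obtain ⟨n, rfl⟩ := Ordinal.lt_omega0.mp hβ
        rw [hg_nat] at ht
        exact ⟨n, ht⟩
      · rintro ⟨n, ht⟩
        refine ⟨(hXPKL n).1 ht, (n : Ordinal), Ordinal.nat_lt_omega0 n, ?_⟩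
        rw [hg_nat]; exact ht
    refine ⟨Y, ⟨hC1 hYC, ?_, ?_, ?_⟩, hYC⟩
    · -- transitive
      intro z hz b hb
      obtain ⟨hzY, hzκ⟩ := ZFSet.mem_inter.mp hz
      obtain ⟨n, hzn⟩ := (hYmem z).mp hzY
      have hzS : z ∈ S n := hXS n (ZFSet.mem_inter.mpr ⟨hzn, hzκ⟩)
      have hbS : b ∈ S n := ((isOrd_of_mem hκord (hSκ n)).1) z hzS hb
      exact ZFSet.mem_inter.mpr ⟨(hYmem b).mpr ⟨n + 1, hSsubX n hbS⟩,
        hκord.1 (S n) (hSκ n) hbS⟩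
    · -- uncountable
      refine lt_of_lt_of_le hwcard (cardZ_mono ?_)
      intro z hz
      exact ZFSet.mem_inter.mpr ⟨(hYmem z).mpr ⟨1, hSsubX 0 (hwS 0 hz)⟩, hκord.1 w hwκ hz⟩
    · -- cfSeq
      refine ⟨S, fun n => ZFSet.mem_inter.mpr ⟨(hYmem (S n)).mpr ⟨n + 1, hSX n⟩, hSκ n⟩, ?_⟩
      intro b hb
      obtain ⟨hbY, hbκ⟩ := ZFSet.mem_inter.mp hb
      obtain ⟨n, hbn⟩ := (hYmem b).mp hbY
      exact ⟨n, Or.inl (hXS n (ZFSet.mem_inter.mpr ⟨hbn, hbκ⟩))⟩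
  · -- properties of F on A
    intro x hx
    refine ⟨Ffun_subset, ?_, lt_of_le_of_lt Ffun_card hx.2.2.1⟩
    intro heq
    have h1 : cardZ (x ∩ κZ) ≤ cardZ x := cardZ_mono fun z hz => (ZFSet.mem_inter.mp hz).1
    have h2 : cardZ x ≤ ℵ₀ := heq ▸ Ffun_card
    exact absurd ((hx.2.2.1.trans_le h1).trans_le h2) (lt_irrefl ℵ₀)
  · -- fibers
    intro a
    by_cases hfib : ∃ x₀, x₀ ∈ Aset κZ lamZ ∧ Ffun κZ x₀ = a
    · obtain ⟨x₀, hx₀, hFx₀⟩ := hfib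
      have htex : ∃ t, t ∈ κZ ∧ t ∉ x₀ := by
        by_contra hcon
        push_neg at hcon
        have hsub : κZ ⊆ x₀ := fun z hz => hcon z hz
        exact absurd (lt_of_le_of_lt (cardZ_mono hsub) hx₀.1.2) (lt_irrefl _)
      obtain ⟨t, htκ, htx₀⟩ := htex
      have block : ∀ x, x ∈ Aset κZ lamZ → Ffun κZ x = a → t ∉ x := by
        intro x hx hFx htx
        have he : x ∩ κZ = x₀ ∩ κZ :=
          inter_eq_of_Ffun_eq (lamZ := lamZ) hx hx₀ (hFx.trans hFx₀.symm)
        have ht2 : t ∈ x₀ ∩ κZ := he ▸ ZFSet.mem_inter.mpr ⟨htx, htκ⟩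
        exact htx₀ (ZFSet.mem_inter.mp ht2).1
      constructor
      · refine ⟨{x | x ∈ PKL κZ lamZ ∧ t ∈ x}, singleton_chainClub hreg (hκlam htκ), ?_⟩
        intro x hxA hFx hxC
        exact block x hxA hFx hxC.2
      · intro hall
        have hzP : insert t ∅ ∈ PKL κZ lamZ := by
          constructor
          · intro z hz
            rcases ZFSet.mem_insert_iff.mp hz with rfl | hz
            · exact hκlam htκ
            · exact absurd hz (ZFSet.notMem_empty z)
          · exact cardZ_insert_lt hreg.1 (empty_mem_PKL (lamZ := lamZ) hreg.1).2
        obtain ⟨x, hxA, hFx, hzx⟩ := hall (insert t ∅) hzP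
        exact block x hxA hFx (hzx (ZFSet.mem_insert t ∅))
    · push_neg at hfib
      constructor
      · exact ⟨PKL κZ lamZ, PKL_chainClub hreg, fun x hxA hFx _ => hfib x hxA hFx⟩
      · intro hall
        obtain ⟨x, hxA, hFx, -⟩ := hall ∅ (empty_mem_PKL hreg.1)
        exact hfib x hxA hFx

end TwoCardinalWC
end
end

section
/- If δ is an inaccessible cardinal and A is a set of ordinals, then V_δ(δ, A) ∩ V_δ = V_δ, where V_δ is the δ-th level of the usual cumulative hierarchy. More generally, for every α < δ, V_α(δ, A) ∩ V_α = V_α. -/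
universe u

open Cardinal FirstOrder

noncomputable section

namespace TwoCardinalWC




section Aux
variable {δ : Cardinal.{u + 1}} {A : Set ZFSet.{u}}

theorem Vh_zero : Vh δ A 0 = A := Ordinal.limitRecOn_zero ..

theorem Vh_succ (α : Ordinal.{u + 1}) :
    Vh δ A (α + 1) = {y | y.toSet ⊆ Vh δ A α ∧ cardZ y < δ} ∪ Vh δ A α :=
  Ordinal.limitRecOn_succ ..

theorem Vh_limit {α : Ordinal.{u + 1}} (h : Order.IsSuccLimit α) :
    Vh δ A α = {s | ∃ β, ∃ _ : β < α, s ∈ Vh δ A β} :=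
  Ordinal.limitRecOn_limit _ _ _ _ h

theorem VN_zero : VN.{u} 0 = ∅ := Ordinal.limitRecOn_zero ..

theorem VN_succ (α : Ordinal.{u + 1}) : VN.{u} (α + 1) = {y | y.toSet ⊆ VN α} :=
  Ordinal.limitRecOn_succ ..

theorem VN_limit {α : Ordinal.{u + 1}} (h : Order.IsSuccLimit α) :
    VN.{u} α = {s | ∃ β, ∃ _ : β < α, s ∈ VN β} :=
  Ordinal.limitRecOn_limit _ _ _ _ h

theorem card_VN_lt {δ : Cardinal.{u + 1}} (hδ : δ.IsInaccessible) :
    ∀ α : Ordinal.{u + 1}, α < δ.ord → #(VN.{u} α) < δ := by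
  intro α
  induction α using Ordinal.limitRecOn with
  | zero =>
    intro _
    rw [VN_zero]
    simpa using aleph0_pos.trans hδ.1
  | add_one α ih =>
    intro hlt
    have hα : α < δ.ord := (Order.lt_succ_of_le le_rfl).trans hlt
    have h1 : #(VN.{u} (α + 1)) ≤ 2 ^ #(VN.{u} α) := by
      rw [← Cardinal.mk_set]
      refine Cardinal.mk_le_of_injective (f := fun y => {z : ↥(VN.{u} α) | (z : ZFSet.{u}) ∈ (y : ZFSet.{u})}) ?_
      rintro ⟨y₁, hy₁⟩ ⟨y₂, hy₂⟩ h
      rw [VN_succ] at hy₁ hy₂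
      ext1
      apply ZFSet.ext
      intro z
      constructor
      · intro hz
        have hzα : z ∈ VN.{u} α := hy₁ hz
        have := Set.ext_iff.1 h ⟨z, hzα⟩
        exact this.1 hz
      · intro hz
        have hzα : z ∈ VN.{u} α := hy₂ hz
        have := Set.ext_iff.1 h ⟨z, hzα⟩
        exact this.2 hz
    exact h1.trans_lt (hδ.isStrongLimit.two_power_lt (ih hα))
  | limit α hlim ih =>
    intro hlt
    rw [VN_limit hlim]
    have heq : {s : ZFSet.{u} | ∃ β, ∃ _ : β < α, s ∈ VN β} =
        ⋃ i : α.ToType, VN.{u} ((Ordinal.ToType.mk (o := α)).symm i) := by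
      ext s
      simp only [Set.mem_iUnion, Set.mem_setOf_eq]
      constructor
      · rintro ⟨β, hβ, hs⟩
        exact ⟨Ordinal.ToType.mk (o := α) ⟨β, hβ⟩, by simpa using hs⟩
      · rintro ⟨i, hi⟩
        exact ⟨_, ((Ordinal.ToType.mk (o := α)).symm i).2, hi⟩
    rw [heq]
    refine (Cardinal.mk_iUnion_le _).trans_lt ?_
    have hcard : #α.ToType < δ := by
      rw [mk_toType]
      exact Cardinal.lt_ord.1 hlt
    refine Cardinal.mul_lt_of_lt hδ.isStrongLimit.aleph0_le hcard ?_
    refine Cardinal.iSup_lt_of_isRegular hδ.isRegular hcard fun i => ?_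
    exact ih _ ((Ordinal.ToType.mk (o := α)).symm i).2 (((Ordinal.ToType.mk (o := α)).symm i).2.trans hlt)

theorem VN_subset_Vh {δ : Cardinal.{u + 1}} {A : Set ZFSet.{u}} (hδ : δ.IsInaccessible) :
    ∀ α : Ordinal.{u + 1}, α ≤ δ.ord → VN.{u} α ⊆ Vh δ A α := by
  have hordlim := Cardinal.isSuccLimit_ord hδ.isStrongLimit.aleph0_le
  intro α
  induction α using Ordinal.limitRecOn with
  | zero => intro _; rw [VN_zero]; exact Set.empty_subset _
  | add_one α ih =>
    intro hle
    have hα : α < δ.ord := (Order.lt_succ_of_le le_rfl).trans_le hle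
    intro y hy
    rw [VN_succ] at hy
    rw [Vh_succ]
    left
    refine ⟨hy.trans (ih hα.le), ?_⟩
    calc cardZ y = #y.toSet := rfl
    _ ≤ #(VN.{u} α) := Cardinal.mk_le_mk_of_subset hy
    _ < δ := card_VN_lt hδ α hα
  | limit α hlim ih =>
    intro hle
    rw [VN_limit hlim, Vh_limit hlim]
    rintro s ⟨β, hβ, hs⟩
    exact ⟨β, hβ, ih β hβ (hβ.le.trans hle) hs⟩

end Aux

/-- If `δ` is inaccessible and `A` is a set of ordinals, then
`V_α(δ, A) ∩ V_α = V_α` for every `α < δ`, and `V_δ(δ, A) ∩ V_δ = V_δ`. -/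
theorem hierarchy_inter_vonNeumann (δZ A : ZFSet.{u}) (hδ : InaccZ δZ)
    (hA : ∀ t ∈ A.toSet, IsOrd t) :
    (∀ α : Ordinal.{u + 1}, α < (cardZ δZ).ord →
      Vh (cardZ δZ) A.toSet α ∩ VN α = VN α) ∧
    Vh (cardZ δZ) A.toSet ((cardZ δZ).ord) ∩ VN ((cardZ δZ).ord) = VN ((cardZ δZ).ord) := by
  have hδ' : (cardZ δZ).IsInaccessible := hδ.2
  have key := VN_subset_Vh (A := A.toSet) hδ'
  constructor
  · intro α hα
    exact Set.inter_eq_right.2 (key α hα.le)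
  · exact Set.inter_eq_right.2 (key _ le_rfl)

end TwoCardinalWC
end
end
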